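/- Let q ∈ ℂ \ {0} with |q| ≠ 1, n ∈ ℕ, and let a, b, c be polynomials over ℂ, not all constants, such that [a]_q^n, [b]_q^n, [c]_q^n are relatively q-prime and satisfy [a]_q^n + [b]_q^n = [c]_q^n, where [P]_q^n(z) = P(z)P(qz)⋯P(q^{n-1}z). Then n ≤ 2. Moreover, if one of a, b, c is constant, then n ≤ 1. -/

import Mathlib

open Polynomial

noncomputable section

/-- q-number [n]_q = 1 + q + ... + q^{n-1}. -/
def qNum (q : ℂ) (n : ℕ) : ℂ := ∑ i ∈ Finset.range n, q ^ i

/-- q-factorial. -/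
def qFact (q : ℂ) (n : ℕ) : ℂ := ∏ i ∈ Finset.range n, qNum q (i + 1)

/-- q-binomial coefficient. -/
def qBinom (q : ℂ) (k j : ℕ) : ℂ := qFact q k / (qFact q j * qFact q (k - j))

/-- q-derivative of a function. -/
def Dqf (q : ℂ) (f : ℂ → ℂ) : ℂ → ℂ := fun z => (f (q * z) - f z) / (q * z - z)

/-- q-analogue of the power (z-w)^n : [z-w]_q^n = (z-w)(z-qw)...(z-q^{n-1}w). -/
def qPow (q w : ℂ) (n : ℕ) : Polynomial ℂ := ∏ i ∈ Finset.range n, (X - C (q ^ i * w))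

/-- q-derivative as a polynomial operation. -/
def qDeriv (q : ℂ) (f : Polynomial ℂ) : Polynomial ℂ :=
  C (q - 1)⁻¹ * ((f.comp (C q * X) - f) /ₘ X)

/-- `w` is a zero of `f` with q-weight `n`. -/
def IsZeroQWeight (q : ℂ) (f : Polynomial ℂ) (w : ℂ) (n : ℕ) : Prop :=
  (w = 0 ∧ f ≠ 0 ∧ Polynomial.rootMultiplicity 0 f = n) ∨
  (w ≠ 0 ∧ (∀ k < n, f.eval (q ^ k * w) = 0) ∧ f.eval (q ^ n * w) ≠ 0)

/-- Canonical q-chain factorization of a polynomial. -/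
structure QFactorization (q : ℂ) (P : Polynomial ℂ) where
  N : ℕ
  z : Fin N → ℂ
  n : Fin N → ℕ
  A : ℂ
  A_ne : A ≠ 0
  n_pos : ∀ j, 1 ≤ n j
  eq : P = Polynomial.C A * ∏ j, qPow q (z j) (n j)
  deg_sum : ∑ j, n j = P.natDegree
  chain : ∀ j : Fin N,
    IsZeroQWeight q (∏ k ∈ Finset.univ.filter (fun k => j ≤ k), qPow q (z k) (n k)) (z j) (n j)
  maximal : ∀ j : Fin N, z j ≠ 0 →
    (∏ k ∈ Finset.univ.filter (fun k => j ≤ k), qPow q (z k) (n k)).eval (q⁻¹ * z j) ≠ 0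

/-- q-difference radical associated to a canonical factorization. -/
def radQ {q : ℂ} {P : Polynomial ℂ} (F : QFactorization q P) : Polynomial ℂ :=
  ∏ j, (X - C (F.z j))

local instance : DecidableEq (Polynomial ℂ) := Classical.decEq _

/-- Truncated q-radical of level μ. -/
def radTruncQ {q : ℂ} {P : Polynomial ℂ} (F : QFactorization q P) (μ : ℕ) : Polynomial ℂ :=
  EuclideanDomain.gcd (∏ j, qPow q (F.z j) (F.n j)) (∏ j, qPow q (F.z j) μ)

/-- f and g have a nonconstant common q-divisor. -/
def HasCommonQDivisor (q : ℂ) (f g : Polynomial ℂ) : Prop :=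
  ∃ (z₀ z₁ z₂ : ℂ) (m n : ℕ) (F G : Polynomial ℂ), 1 ≤ m ∧ 1 ≤ n ∧
    f = qPow q z₁ m * F ∧ g = qPow q z₂ n * G ∧ (z₀ = z₁ ∨ z₀ = z₂) ∧
    f * g = qPow q z₀ (m + n) * (F * G)

/-- q-shifted power [P]_q^n(z) = P(z)P(qz)...(P(q^{n-1}z)). -/
def qShiftPow (q : ℂ) (P : Polynomial ℂ) (n : ℕ) : Polynomial ℂ :=
  ∏ i ∈ Finset.range n, P.comp (C (q ^ i) * X)

/-- gcd of a list of polynomials. -/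
def gcdList (l : List (Polynomial ℂ)) : Polynomial ℂ := l.foldr EuclideanDomain.gcd 0
/- ### Auxiliary lemmas for `q_fermat_three` -/

section QFermatAux

open Finset

lemma coeff_comp_CmulX (p : ℂ[X]) (u : ℂ) (k : ℕ) :
    (p.comp (C u * X)).coeff k = p.coeff k * u ^ k := by
  induction p using Polynomial.induction_on' with
  | add f g hf hg => simp [add_comp, hf, hg, add_mul]
  | monomial i r =>
    rw [monomial_comp, mul_pow, ← C_pow, ← mul_assoc, ← C_mul, coeff_C_mul, coeff_X_pow,
      coeff_monomial]
    rcases eq_or_ne i k with rfl | h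
    · simp [mul_comm]
    · simp [h, Ne.symm h]

lemma comp_CmulX_ne_zero {p : ℂ[X]} (hp : p ≠ 0) {u : ℂ} (hu : u ≠ 0) :
    p.comp (C u * X) ≠ 0 := by
  intro h
  apply hp
  ext k
  have := congrArg (fun r => Polynomial.coeff r k) h
  simp only [coeff_comp_CmulX, coeff_zero] at this
  simpa [hu] using this

lemma natDegree_comp_CmulX (p : ℂ[X]) {u : ℂ} (hu : u ≠ 0) :
    (p.comp (C u * X)).natDegree = p.natDegree := by
  rw [natDegree_comp, natDegree_C_mul_X _ hu, mul_one]

lemma qShiftPow_ne_zero {q : ℂ} (hq : q ≠ 0) {p : ℂ[X]} (hp : p ≠ 0) (n : ℕ) :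
    qShiftPow q p n ≠ 0 := by
  apply Finset.prod_ne_zero_iff.mpr
  intro i _
  exact comp_CmulX_ne_zero hp (pow_ne_zero _ hq)

lemma natDegree_qShiftPow {q : ℂ} (hq : q ≠ 0) {p : ℂ[X]} (hp : p ≠ 0) (n : ℕ) :
    (qShiftPow q p n).natDegree = n * p.natDegree := by
  rw [qShiftPow, natDegree_prod _ _ (fun i _ => comp_CmulX_ne_zero hp (pow_ne_zero _ hq)),
    Finset.sum_congr rfl fun i _ => natDegree_comp_CmulX p (pow_ne_zero _ hq)]
  simp [mul_comm]

lemma qShiftPow_eval (q : ℂ) (p : ℂ[X]) (n : ℕ) (w : ℂ) :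
    (qShiftPow q p n).eval w = ∏ i ∈ range n, p.eval (q ^ i * w) := by
  simp [qShiftPow, eval_prod, eval_comp]

lemma qShiftPow_eval_zero (q : ℂ) (p : ℂ[X]) (n : ℕ) :
    (qShiftPow q p n).eval 0 = p.eval 0 ^ n := by
  simp [qShiftPow_eval]

/-- the product of the shifted factors for i = 1, ..., n-1 -/
def qTilde (q : ℂ) (p : ℂ[X]) (n : ℕ) : Polynomial ℂ :=
  ∏ i ∈ Finset.Ico 1 n, p.comp (C (q ^ i) * X)

lemma qShiftPow_eq_mul_qTilde (q : ℂ) (p : ℂ[X]) {n : ℕ} (hn : 1 ≤ n) :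
    qShiftPow q p n = p * qTilde q p n := by
  rw [qShiftPow, Finset.prod_range_eq_mul_Ico _ hn]
  simp [qTilde]

lemma qShiftPow_comp (q : ℂ) (p : ℂ[X]) {n : ℕ} (hn : 1 ≤ n) :
    (qShiftPow q p n).comp (C q * X) = qTilde q p n * p.comp (C (q ^ n) * X) := by
  rw [qShiftPow, Polynomial.prod_comp]
  have h1 : ∀ i : ℕ, (p.comp (C (q ^ i) * X)).comp (C q * X) = p.comp (C (q ^ (i + 1)) * X) := by
    intro i
    rw [comp_assoc, mul_comp, C_comp, X_comp]
    congr 1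
    rw [pow_succ, C_mul]
    ring
  simp only [h1]
  have h2 : ∏ i ∈ range n, p.comp (C (q ^ (i + 1)) * X)
      = ∏ i ∈ Finset.Ico 1 (n + 1), p.comp (C (q ^ i) * X) := by
    rw [Finset.prod_Ico_eq_prod_range]
    simp [add_comm]
  rw [h2, Finset.prod_Ico_succ_top hn]
  rfl

lemma qTilde_ne_zero {q : ℂ} (hq : q ≠ 0) {p : ℂ[X]} (hp : p ≠ 0) (n : ℕ) :
    qTilde q p n ≠ 0 := by
  apply Finset.prod_ne_zero_iff.mpr
  intro i _
  exact comp_CmulX_ne_zero hp (pow_ne_zero _ hq)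

lemma natDegree_qTilde {q : ℂ} (hq : q ≠ 0) {p : ℂ[X]} (hp : p ≠ 0) (n : ℕ) :
    (qTilde q p n).natDegree = (n - 1) * p.natDegree := by
  rw [qTilde, natDegree_prod _ _ (fun i _ => comp_CmulX_ne_zero hp (pow_ne_zero _ hq)),
    Finset.sum_congr rfl fun i _ => natDegree_comp_CmulX p (pow_ne_zero _ hq)]
  simp [mul_comm, Nat.card_Ico]

lemma qTilde_eval_zero (q : ℂ) (p : ℂ[X]) (n : ℕ) :
    (qTilde q p n).eval 0 = p.eval 0 ^ (n - 1) := by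
  simp [qTilde, eval_prod, eval_comp, Nat.card_Ico]

lemma qPow_one (q z : ℂ) : qPow q z 1 = X - C z := by
  simp [qPow]

lemma qPow_two (q z : ℂ) : qPow q z 2 = (X - C z) * (X - C (q * z)) := by
  rw [qPow, Finset.prod_range_succ, Finset.prod_range_one]
  simp

lemma exists_factor_root {q : ℂ} {p : ℂ[X]} {n : ℕ} {w : ℂ}
    (h : (qShiftPow q p n).eval w = 0) : ∃ i < n, p.eval (q ^ i * w) = 0 := by
  rw [qShiftPow_eval] at h
  obtain ⟨i, hi, h0⟩ := Finset.prod_eq_zero_iff.mp h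
  exact ⟨i, Finset.mem_range.mp hi, h0⟩

lemma root_of_factor {q : ℂ} {p : ℂ[X]} {n i : ℕ} (hi : i < n) {v : ℂ}
    (h : p.eval (q ^ i * v) = 0) : (qShiftPow q p n).eval v = 0 := by
  rw [qShiftPow_eval]
  exact Finset.prod_eq_zero (Finset.mem_range.mpr hi) h

/-- a root of `qShiftPow q p n` (`n ≥ 2`) has a neighbour root. -/
lemma neighbor_root {q : ℂ} (hq : q ≠ 0) {p : ℂ[X]} {n : ℕ} (hn : 2 ≤ n) {w : ℂ}
    (h : (qShiftPow q p n).eval w = 0) :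
    (qShiftPow q p n).eval (q⁻¹ * w) = 0 ∨ (qShiftPow q p n).eval (q * w) = 0 := by
  obtain ⟨i, hi, h0⟩ := exists_factor_root h
  rcases Nat.lt_or_ge (i + 1) n with h1 | h1
  · left
    apply root_of_factor h1
    rw [show q ^ (i + 1) * (q⁻¹ * w) = q ^ i * w by field_simp; ring]
    exact h0
  · have hi1 : 1 ≤ i := by omega
    right
    apply root_of_factor (show i - 1 < n by omega)
    rw [show q ^ (i - 1) * (q * w) = q ^ i * w by
      rw [← mul_assoc, ← pow_succ]
      congr 2
      omega]
    exact h0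

lemma hcd_of_common_root {q : ℂ} (hq : q ≠ 0) {n : ℕ} (hn : 2 ≤ n) {f g : ℂ[X]} {w : ℂ}
    (hf : (qShiftPow q f n).eval w = 0) (hg : (qShiftPow q g n).eval w = 0) :
    HasCommonQDivisor q (qShiftPow q f n) (qShiftPow q g n) := by
  rcases eq_or_ne w 0 with rfl | hw
  · have hF : (X - C (0:ℂ)) ∣ qShiftPow q f n := dvd_iff_isRoot.mpr hf
    have hG : (X - C (0:ℂ)) ∣ qShiftPow q g n := dvd_iff_isRoot.mpr hg
    obtain ⟨F', hF'⟩ := hF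
    obtain ⟨G', hG'⟩ := hG
    refine ⟨0, 0, 0, 1, 1, F', G', le_refl 1, le_refl 1, ?_, ?_, Or.inl rfl, ?_⟩
    · rwa [qPow_one]
    · rwa [qPow_one]
    · rw [qPow_two, hF', hG']
      ring_nf
  · rcases neighbor_root hq hn hf with h | h
    · obtain ⟨F', hF'⟩ := dvd_iff_isRoot.mpr h
      obtain ⟨G', hG'⟩ := dvd_iff_isRoot.mpr hg
      refine ⟨q⁻¹ * w, q⁻¹ * w, w, 1, 1, F', G', le_refl 1, le_refl 1, ?_, ?_, Or.inl rfl, ?_⟩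
      · rwa [qPow_one]
      · rwa [qPow_one]
      · rw [qPow_two, hF', hG']
        rw [show q * (q⁻¹ * w) = w by field_simp]
        ring
    · obtain ⟨F', hF'⟩ := dvd_iff_isRoot.mpr h
      obtain ⟨G', hG'⟩ := dvd_iff_isRoot.mpr hg
      refine ⟨w, q * w, w, 1, 1, F', G', le_refl 1, le_refl 1, ?_, ?_, Or.inr rfl, ?_⟩
      · rwa [qPow_one]
      · rwa [qPow_one]
      · rw [qPow_two, hF', hG']
        ring

/-- coprimality over `ℂ[X]` from the absence of common roots. -/
lemma coprime_of_no_common_root {f g : ℂ[X]} (hf : f ≠ 0)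
    (h : ∀ w : ℂ, f.eval w = 0 → g.eval w ≠ 0) : IsCoprime f g := by
  rw [← EuclideanDomain.gcd_isUnit_iff]
  by_contra hu
  have hdeg : (EuclideanDomain.gcd f g).degree ≠ 0 := fun h0 =>
    hu (Polynomial.isUnit_iff_degree_eq_zero.mpr h0)
  obtain ⟨w, hw⟩ := IsAlgClosed.exists_root (EuclideanDomain.gcd f g) hdeg
  have hw0 : (EuclideanDomain.gcd f g).eval w = 0 := hw
  have h1 : f.eval w = 0 := by
    obtain ⟨e, he⟩ := EuclideanDomain.gcd_dvd_left f g
    rw [he, eval_mul, hw0, zero_mul]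
  have h2 : g.eval w = 0 := by
    obtain ⟨e, he⟩ := EuclideanDomain.gcd_dvd_right f g
    rw [he, eval_mul, hw0, zero_mul]
  exact h w h1 h2

lemma qpow_ne_one {q : ℂ} (habs : ‖q‖ ≠ 1) {m : ℕ} (hm : 1 ≤ m) : q ^ m ≠ 1 := by
  intro h
  have h1 : ‖q‖ ^ m = 1 := by
    have := congrArg (‖·‖) h
    rwa [norm_pow, norm_one] at this
  rcases lt_trichotomy (‖q‖) 1 with h2 | h2 | h2
  · have := pow_lt_one₀ (norm_nonneg q) h2 (Nat.one_le_iff_ne_zero.mp hm)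
    linarith
  · exact habs h2
  · have := one_lt_pow₀ h2 (Nat.one_le_iff_ne_zero.mp hm)
    linarith

lemma natDegree_W_le {q : ℂ} (hq : q ≠ 0) (P Q : ℂ[X]) :
    (P * Q.comp (C q * X) - P.comp (C q * X) * Q).natDegree ≤ P.natDegree + Q.natDegree := by
  apply (natDegree_sub_le _ _).trans
  apply max_le
  · exact natDegree_mul_le.trans (by rw [natDegree_comp_CmulX _ hq])
  · exact natDegree_mul_le.trans (by rw [natDegree_comp_CmulX _ hq])

end QFermatAux

section QFermatAux2

open Finset

lemma qpow_inj {q : ℂ} (hq0 : q ≠ 0) (habs : ‖q‖ ≠ 1) {i j : ℕ}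
    (h : q ^ i = q ^ j) : i = j := by
  by_contra hne
  have key : ∀ i j : ℕ, i < j → q ^ i = q ^ j → False := by
    intro i j hlt h
    have hji : j = i + (j - i) := by omega
    rw [hji, pow_add] at h
    have h1 : q ^ i * 1 = q ^ i * q ^ (j - i) := by rw [mul_one]; exact h
    have h2 := (mul_left_cancel₀ (pow_ne_zero i hq0) h1).symm
    exact qpow_ne_one habs (by omega) h2
  rcases Nat.lt_or_ge i j with hlt | hge
  · exact key i j hlt h
  · exact key j i (by omega) h.symm

lemma monomial_of_selfshift {q : ℂ} (hq0 : q ≠ 0) (habs : ‖q‖ ≠ 1) {P : ℂ[X]}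
    (hP : P ≠ 0) (hd : P ∣ P.comp (C q * X)) :
    ∃ (α : ℂ) (k : ℕ), α ≠ 0 ∧ k = P.natDegree ∧ P = C α * X ^ k := by
  obtain ⟨u, hu⟩ := hd
  have hPσ : P.comp (C q * X) ≠ 0 := comp_CmulX_ne_zero hP hq0
  have hu0 : u ≠ 0 := by rintro rfl; rw [mul_zero] at hu; exact hPσ hu
  have hudeg : u.natDegree = 0 := by
    have h1 := natDegree_comp_CmulX P hq0
    rw [hu, natDegree_mul hP hu0] at h1
    omega
  obtain ⟨lam, hlam⟩ := Polynomial.natDegree_eq_zero.mp hudeg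
  have hcoeff : ∀ k, P.coeff k * q ^ k = P.coeff k * lam := by
    intro k
    have := congrArg (fun r => Polynomial.coeff r k) hu
    simpa [coeff_comp_CmulX, ← hlam, coeff_mul_C] using this
  have huniq : ∀ k, P.coeff k ≠ 0 → q ^ k = lam := fun k hk =>
    mul_left_cancel₀ hk (hcoeff k)
  refine ⟨P.leadingCoeff, P.natDegree, leadingCoeff_ne_zero.mpr hP, rfl, ?_⟩
  ext k
  rcases eq_or_ne k P.natDegree with rfl | hk
  · rw [coeff_C_mul, coeff_X_pow, if_pos rfl, mul_one, Polynomial.coeff_natDegree]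
  · have hzero : P.coeff k = 0 := by
      by_contra hne
      have e1 := huniq k hne
      have e2 := huniq P.natDegree (by
        rw [Polynomial.coeff_natDegree]
        exact leadingCoeff_ne_zero.mpr hP)
      exact hk (qpow_inj hq0 habs (e1.trans e2.symm))
    rw [coeff_C_mul, coeff_X_pow, if_neg hk, mul_zero, hzero]

lemma no_binom {q : ℂ} (hq0 : q ≠ 0) (habs : ‖q‖ ≠ 1) {n : ℕ} (hn : 2 ≤ n)
    {c : ℂ[X]} (hc : c ≠ 0) {α β : ℂ} (hα : α ≠ 0) (hβ : β ≠ 0) {k : ℕ} (hk : 1 ≤ k)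
    (hC : qShiftPow q c n = C α * X ^ k + C β) : False := by
  have hC0 : qShiftPow q c n ≠ 0 := qShiftPow_ne_zero hq0 hc n
  have hev0 : (qShiftPow q c n).eval 0 = β := by
    rw [hC]
    simp [zero_pow (by omega : k ≠ 0)]
  have hXd : (C α * X ^ k).natDegree = k := by
    rw [natDegree_C_mul_X_pow k α hα]
  have hdegC : (qShiftPow q c n).natDegree = k := by
    rw [hC, natDegree_add_C, hXd]
  have hdegne : (qShiftPow q c n).degree ≠ 0 := by
    rw [degree_eq_natDegree hC0, hdegC]
    exact_mod_cast (by omega : k ≠ 0)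
  obtain ⟨w, hw⟩ := IsAlgClosed.exists_root _ hdegne
  have hw' : (qShiftPow q c n).eval w = 0 := hw
  have hw0 : w ≠ 0 := by
    rintro rfl
    rw [hw'] at hev0
    exact hβ hev0.symm
  have key : ∃ r : ℂ, r ≠ 0 ∧ (qShiftPow q c n).eval r = 0 ∧
      (qShiftPow q c n).eval (q * r) = 0 := by
    rcases neighbor_root hq0 hn hw' with h | h
    · refine ⟨q⁻¹ * w, mul_ne_zero (inv_ne_zero hq0) hw0, h, ?_⟩
      rwa [show q * (q⁻¹ * w) = w by field_simp]
    · exact ⟨w, hw0, hw', h⟩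
  obtain ⟨r, hr0, h1, h2⟩ := key
  rw [hC] at h1 h2
  simp only [eval_add, eval_mul, eval_pow, eval_C, eval_X] at h1 h2
  have h3 : α * r ^ k = α * (q * r) ^ k := by linear_combination h1 - h2
  have h4 := mul_left_cancel₀ hα h3
  rw [mul_pow] at h4
  have h5 : (1 : ℂ) * r ^ k = q ^ k * r ^ k := by rw [one_mul]; exact h4
  have h6 := mul_right_cancel₀ (pow_ne_zero k hr0) h5
  exact qpow_ne_one habs hk h6.symm

lemma W_ne_zero {q : ℂ} (hq0 : q ≠ 0) (habs : ‖q‖ ≠ 1) {n : ℕ} (hn : 2 ≤ n)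
    {a b c : ℂ[X]} (ha : a ≠ 0) (hb : b ≠ 0) (hc : c ≠ 0)
    (hconst : ¬(a.natDegree = 0 ∧ b.natDegree = 0 ∧ c.natDegree = 0))
    (hab : ¬ HasCommonQDivisor q (qShiftPow q a n) (qShiftPow q b n))
    (hsum : qShiftPow q a n + qShiftPow q b n = qShiftPow q c n) :
    qShiftPow q a n * (qShiftPow q b n).comp (C q * X)
      - (qShiftPow q a n).comp (C q * X) * qShiftPow q b n ≠ 0 := by
  intro h0
  have hABeq : qShiftPow q a n * (qShiftPow q b n).comp (C q * X)
      = (qShiftPow q a n).comp (C q * X) * qShiftPow q b n := sub_eq_zero.mp h0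
  have hAne : qShiftPow q a n ≠ 0 := qShiftPow_ne_zero hq0 ha n
  have hBne : qShiftPow q b n ≠ 0 := qShiftPow_ne_zero hq0 hb n
  have hnoroot : ∀ w, (qShiftPow q a n).eval w = 0 → (qShiftPow q b n).eval w ≠ 0 :=
    fun w h1 h2 => hab (hcd_of_common_root hq0 hn h1 h2)
  have hcop : IsCoprime (qShiftPow q a n) (qShiftPow q b n) :=
    coprime_of_no_common_root hAne hnoroot
  have hdA : qShiftPow q a n ∣ (qShiftPow q a n).comp (C q * X) :=
    hcop.dvd_of_dvd_mul_right (by rw [← hABeq]; exact dvd_mul_right _ _)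
  have hdB : qShiftPow q b n ∣ (qShiftPow q b n).comp (C q * X) :=
    hcop.symm.dvd_of_dvd_mul_left (by rw [hABeq]; exact dvd_mul_left _ _)
  obtain ⟨α, k, hα, hkdeg, hAmono⟩ := monomial_of_selfshift hq0 habs hAne hdA
  obtain ⟨β, m, hβ, hmdeg, hBmono⟩ := monomial_of_selfshift hq0 habs hBne hdB
  have hka : k = n * a.natDegree := by rw [hkdeg, natDegree_qShiftPow hq0 ha n]
  have hmb : m = n * b.natDegree := by rw [hmdeg, natDegree_qShiftPow hq0 hb n]
  rcases Nat.eq_zero_or_pos k with hk | hk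
  · rcases Nat.eq_zero_or_pos m with hm | hm
    · -- all constants
      have h3 : n * c.natDegree = 0 := by
        rw [← natDegree_qShiftPow hq0 hc n, ← hsum, hAmono, hBmono, hk, hm, pow_zero,
          mul_one, mul_one, ← C_add, natDegree_C]
      have hda : a.natDegree = 0 := by
        rcases Nat.mul_eq_zero.mp (hka.symm.trans hk) with h | h
        · omega
        · exact h
      have hdb : b.natDegree = 0 := by
        rcases Nat.mul_eq_zero.mp (hmb.symm.trans hm) with h | h
        · omega
        · exact h
      have hdc : c.natDegree = 0 := by
        rcases Nat.mul_eq_zero.mp h3 with h | h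
        · omega
        · exact h
      exact hconst ⟨hda, hdb, hdc⟩
    · exact no_binom hq0 habs hn hc hβ hα hm
        (by rw [← hsum, hAmono, hBmono, hk, pow_zero, mul_one, add_comm])
  · rcases Nat.eq_zero_or_pos m with hm | hm
    · exact no_binom hq0 habs hn hc hα hβ hk
        (by rw [← hsum, hAmono, hBmono, hm, pow_zero, mul_one])
    · apply hab (hcd_of_common_root hq0 hn (w := 0) ?_ ?_)
      · rw [hAmono]
        simp [zero_pow (by omega : k ≠ 0)]
      · rw [hBmono]
        simp [zero_pow (by omega : m ≠ 0)]

end QFermatAux2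

section QFermatAux3

lemma isCoprime_X_of_eval_zero {f : ℂ[X]} (hf : f.eval 0 ≠ 0) : IsCoprime (X : ℂ[X]) f :=
  coprime_of_no_common_root X_ne_zero (fun w hw => by
    rw [eval_X] at hw
    rw [hw]
    exact hf)

lemma coprime_qTilde {q : ℂ} (hq0 : q ≠ 0) {n : ℕ} (hn : 1 ≤ n) {f g : ℂ[X]}
    (hf : f ≠ 0)
    (h : ∀ w, (qShiftPow q f n).eval w = 0 → (qShiftPow q g n).eval w ≠ 0) :
    IsCoprime (qTilde q f n) (qTilde q g n) :=
  coprime_of_no_common_root (qTilde_ne_zero hq0 hf n) (fun w h1 h2 =>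
    (h w (by rw [qShiftPow_eq_mul_qTilde q f hn, eval_mul, h1, mul_zero]))
      (by rw [qShiftPow_eq_mul_qTilde q g hn, eval_mul, h2, mul_zero]))

lemma degree_ne_zero_of_natDegree_pos {f : ℂ[X]} (hf : f ≠ 0) (h : 0 < f.natDegree) :
    f.degree ≠ 0 := by
  rw [degree_eq_natDegree hf]
  exact_mod_cast (by omega : f.natDegree ≠ 0)

end QFermatAux3

lemma q_fermat_arith {n da db dc : ℕ} (hn : 2 ≤ n)
    (hconst : ¬(da = 0 ∧ db = 0 ∧ dc = 0))
    (m1 : 1 + ((n - 1) * da + ((n - 1) * db + (n - 1) * dc)) ≤ n * db + n * dc)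
    (m2 : 1 + ((n - 1) * da + ((n - 1) * db + (n - 1) * dc)) ≤ n * da + n * dc)
    (m3 : 1 + ((n - 1) * da + ((n - 1) * db + (n - 1) * dc)) ≤ n * da + n * db) :
    n ≤ 2 ∧ ((da = 0 ∨ db = 0 ∨ dc = 0) → n ≤ 1) := by
  obtain ⟨j, hj1, rfl⟩ : ∃ j, 1 ≤ j ∧ n = j + 1 := ⟨n - 1, by omega, by omega⟩
  rw [Nat.add_sub_cancel] at m1 m2 m3
  have key_a : (j + 1) * da + 1 ≤ da + db + dc := by nlinarith [m1]
  have key_b : (j + 1) * db + 1 ≤ da + db + dc := by nlinarith [m2]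
  have key_c : (j + 1) * dc + 1 ≤ da + db + dc := by nlinarith [m3]
  constructor
  · by_contra hh
    have hj2 : 2 ≤ j := by omega
    nlinarith [key_a, key_b, key_c]
  · rintro (h | h | h)
    · by_contra hh
      rw [h] at key_a
      nlinarith [key_b, key_c, key_a]
    · by_contra hh
      rw [h] at key_b
      nlinarith [key_a, key_c, key_b]
    · by_contra hh
      rw [h] at key_c
      nlinarith [key_a, key_b, key_c]

/-- q-difference Fermat equation [a]_q^n + [b]_q^n = [c]_q^n forces n ≤ 2. -/
theorem q_fermat_three (q : ℂ) (hq0 : q ≠ 0) (habs : ‖q‖ ≠ 1) (n : ℕ)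
    (a b c : Polynomial ℂ)
    (hconst : ¬ (a.natDegree = 0 ∧ b.natDegree = 0 ∧ c.natDegree = 0))
    (hab : ¬ HasCommonQDivisor q (qShiftPow q a n) (qShiftPow q b n))
    (hac : ¬ HasCommonQDivisor q (qShiftPow q a n) (qShiftPow q c n))
    (hbc : ¬ HasCommonQDivisor q (qShiftPow q b n) (qShiftPow q c n))
    (hsum : qShiftPow q a n + qShiftPow q b n = qShiftPow q c n) :
    n ≤ 2 ∧ ((a.natDegree = 0 ∨ b.natDegree = 0 ∨ c.natDegree = 0) → n ≤ 1) := by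
  rcases Nat.lt_or_ge n 2 with hn2 | hn2
  · exact ⟨by omega, fun _ => by omega⟩
  have hzero : ∀ p : ℂ[X], p = 0 → qShiftPow q p n = 0 := by
    intro p hp
    rw [qShiftPow]
    apply Finset.prod_eq_zero (Finset.mem_range.mpr (by omega : 0 < n))
    simp [hp]
  -- dispatch the degenerate zero cases
  by_cases ha : a = 0
  · exfalso
    have hA0 := hzero a ha
    rw [hA0, zero_add] at hsum
    by_cases hb : b = 0
    · have hC0 : qShiftPow q c n = 0 := by rw [← hsum, hzero b hb]
      have hc0 : c = 0 := by
        by_contra hcc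
        exact qShiftPow_ne_zero hq0 hcc n hC0
      exact hconst ⟨by simp [ha], by simp [hb], by simp [hc0]⟩
    · have hBne := qShiftPow_ne_zero hq0 hb n
      rcases Nat.eq_zero_or_pos b.natDegree with hdb | hdb
      · have hcne : c ≠ 0 := by
          intro hcc
          exact hBne (hsum.trans (hzero c hcc))
        have h1 : n * c.natDegree = 0 := by
          rw [← natDegree_qShiftPow hq0 hcne n, ← hsum, natDegree_qShiftPow hq0 hb n, hdb,
            mul_zero]
        rcases Nat.mul_eq_zero.mp h1 with h2 | h2
        · omega
        · exact hconst ⟨by simp [ha], hdb, h2⟩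
      · have hdegne : (qShiftPow q b n).degree ≠ 0 :=
          degree_ne_zero_of_natDegree_pos hBne
            (by rw [natDegree_qShiftPow hq0 hb n]; positivity)
        obtain ⟨w, hw⟩ := IsAlgClosed.exists_root _ hdegne
        have hw' : (qShiftPow q b n).eval w = 0 := hw
        exact hbc (hcd_of_common_root hq0 hn2 hw' (by rw [← hsum]; exact hw'))
  by_cases hb : b = 0
  · exfalso
    have hB0 := hzero b hb
    rw [hB0, add_zero] at hsum
    have hAne := qShiftPow_ne_zero hq0 ha n
    rcases Nat.eq_zero_or_pos a.natDegree with hda | hda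
    · have hcne : c ≠ 0 := by
        intro hcc
        exact hAne (hsum.trans (hzero c hcc))
      have h1 : n * c.natDegree = 0 := by
        rw [← natDegree_qShiftPow hq0 hcne n, ← hsum, natDegree_qShiftPow hq0 ha n, hda,
          mul_zero]
      rcases Nat.mul_eq_zero.mp h1 with h2 | h2
      · omega
      · exact hconst ⟨hda, by simp [hb], h2⟩
    · have hdegne : (qShiftPow q a n).degree ≠ 0 :=
        degree_ne_zero_of_natDegree_pos hAne
          (by rw [natDegree_qShiftPow hq0 ha n]; positivity)
      obtain ⟨w, hw⟩ := IsAlgClosed.exists_root _ hdegne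
      have hw' : (qShiftPow q a n).eval w = 0 := hw
      exact hac (hcd_of_common_root hq0 hn2 hw' (by rw [← hsum]; exact hw'))
  by_cases hc : c = 0
  · exfalso
    have hC0 := hzero c hc
    rw [hC0] at hsum
    have hAne := qShiftPow_ne_zero hq0 ha n
    have hBA : qShiftPow q b n = -qShiftPow q a n := by linear_combination hsum
    rcases Nat.eq_zero_or_pos a.natDegree with hda | hda
    · have h1 : n * b.natDegree = 0 := by
        rw [← natDegree_qShiftPow hq0 hb n, hBA, natDegree_neg,
          natDegree_qShiftPow hq0 ha n, hda, mul_zero]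
      rcases Nat.mul_eq_zero.mp h1 with h2 | h2
      · omega
      · exact hconst ⟨hda, h2, by simp [hc]⟩
    · have hdegne : (qShiftPow q a n).degree ≠ 0 :=
        degree_ne_zero_of_natDegree_pos hAne
          (by rw [natDegree_qShiftPow hq0 ha n]; positivity)
      obtain ⟨w, hw⟩ := IsAlgClosed.exists_root _ hdegne
      have hw' : (qShiftPow q a n).eval w = 0 := hw
      exact hab (hcd_of_common_root hq0 hn2 hw' (by rw [hBA, eval_neg, hw', neg_zero]))
  -- main case: a, b, c all nonzero
  have hAne := qShiftPow_ne_zero hq0 ha n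
  have hBne := qShiftPow_ne_zero hq0 hb n
  have hCne := qShiftPow_ne_zero hq0 hc n
  have hdA := natDegree_qShiftPow hq0 ha n
  have hdB := natDegree_qShiftPow hq0 hb n
  have hdC := natDegree_qShiftPow hq0 hc n
  have hrab : ∀ w, (qShiftPow q a n).eval w = 0 → (qShiftPow q b n).eval w ≠ 0 :=
    fun w h1 h2 => hab (hcd_of_common_root hq0 hn2 h1 h2)
  have hrac : ∀ w, (qShiftPow q a n).eval w = 0 → (qShiftPow q c n).eval w ≠ 0 :=
    fun w h1 h2 => hac (hcd_of_common_root hq0 hn2 h1 h2)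
  have hrbc : ∀ w, (qShiftPow q b n).eval w = 0 → (qShiftPow q c n).eval w ≠ 0 :=
    fun w h1 h2 => hbc (hcd_of_common_root hq0 hn2 h1 h2)
  have hn1 : 1 ≤ n := by omega
  -- the q-Wronskian
  have hWne := W_ne_zero hq0 habs hn2 ha hb hc hconst hab hsum
  have hWac : qShiftPow q a n * (qShiftPow q b n).comp (C q * X)
      - (qShiftPow q a n).comp (C q * X) * qShiftPow q b n
      = qShiftPow q a n * (qShiftPow q c n).comp (C q * X)
      - (qShiftPow q a n).comp (C q * X) * qShiftPow q c n := by
    rw [← hsum, add_comp]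
    ring
  have hWbc : qShiftPow q a n * (qShiftPow q b n).comp (C q * X)
      - (qShiftPow q a n).comp (C q * X) * qShiftPow q b n
      = -(qShiftPow q b n * (qShiftPow q c n).comp (C q * X)
      - (qShiftPow q b n).comp (C q * X) * qShiftPow q c n) := by
    rw [← hsum, add_comp]
    ring
  -- upper bounds on the degree of W
  have hb1 : (qShiftPow q a n * (qShiftPow q b n).comp (C q * X)
      - (qShiftPow q a n).comp (C q * X) * qShiftPow q b n).natDegree
      ≤ n * a.natDegree + n * b.natDegree := by
    have := natDegree_W_le hq0 (qShiftPow q a n) (qShiftPow q b n)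
    rwa [hdA, hdB] at this
  have hb2 : (qShiftPow q a n * (qShiftPow q b n).comp (C q * X)
      - (qShiftPow q a n).comp (C q * X) * qShiftPow q b n).natDegree
      ≤ n * a.natDegree + n * c.natDegree := by
    rw [hWac]
    have := natDegree_W_le hq0 (qShiftPow q a n) (qShiftPow q c n)
    rwa [hdA, hdC] at this
  have hb3 : (qShiftPow q a n * (qShiftPow q b n).comp (C q * X)
      - (qShiftPow q a n).comp (C q * X) * qShiftPow q b n).natDegree
      ≤ n * b.natDegree + n * c.natDegree := by
    rw [hWbc, natDegree_neg]
    have := natDegree_W_le hq0 (qShiftPow q b n) (qShiftPow q c n)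
    rwa [hdB, hdC] at this
  -- factorizations of W
  have hWfa : qShiftPow q a n * (qShiftPow q b n).comp (C q * X)
      - (qShiftPow q a n).comp (C q * X) * qShiftPow q b n
      = qTilde q a n * (a * (qShiftPow q b n).comp (C q * X)
        - a.comp (C (q ^ n) * X) * qShiftPow q b n) := by
    rw [qShiftPow_comp q a hn1, qShiftPow_eq_mul_qTilde q a hn1]
    ring
  have hWfb : qShiftPow q a n * (qShiftPow q b n).comp (C q * X)
      - (qShiftPow q a n).comp (C q * X) * qShiftPow q b n
      = qTilde q b n * (qShiftPow q a n * b.comp (C (q ^ n) * X)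
        - (qShiftPow q a n).comp (C q * X) * b) := by
    rw [qShiftPow_comp q b hn1, qShiftPow_eq_mul_qTilde q b hn1]
    ring
  have hWfc : qShiftPow q a n * (qShiftPow q b n).comp (C q * X)
      - (qShiftPow q a n).comp (C q * X) * qShiftPow q b n
      = qTilde q c n * (qShiftPow q a n * c.comp (C (q ^ n) * X)
        - (qShiftPow q a n).comp (C q * X) * c) := by
    rw [hWac, qShiftPow_comp q c hn1, qShiftPow_eq_mul_qTilde q c hn1]
    ring
  -- tilde coprimality
  have copAB : IsCoprime (qTilde q a n) (qTilde q b n) := coprime_qTilde hq0 hn1 ha hrab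
  have copAC : IsCoprime (qTilde q a n) (qTilde q c n) := coprime_qTilde hq0 hn1 ha hrac
  have copBC : IsCoprime (qTilde q b n) (qTilde q c n) := coprime_qTilde hq0 hn1 hb hrbc
  -- the key divisibility
  have hdvd : X * (qTilde q a n * (qTilde q b n * qTilde q c n))
      ∣ qShiftPow q a n * (qShiftPow q b n).comp (C q * X)
      - (qShiftPow q a n).comp (C q * X) * qShiftPow q b n := by
    by_cases hb0 : b.eval 0 = 0
    · -- then a and c do not vanish at 0
      have ha0 : a.eval 0 ≠ 0 := by
        intro h0
        refine hrab 0 ?_ ?_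
        · rw [qShiftPow_eval_zero, h0, zero_pow (by omega : n ≠ 0)]
        · rw [qShiftPow_eval_zero, hb0, zero_pow (by omega : n ≠ 0)]
      have hc0 : c.eval 0 ≠ 0 := by
        intro h0
        refine hrbc 0 ?_ ?_
        · rw [qShiftPow_eval_zero, hb0, zero_pow (by omega : n ≠ 0)]
        · rw [qShiftPow_eval_zero, h0, zero_pow (by omega : n ≠ 0)]
      have hXV : X ∣ (qShiftPow q a n * b.comp (C (q ^ n) * X)
          - (qShiftPow q a n).comp (C q * X) * b) := by
        rw [X_dvd_iff, coeff_zero_eq_eval_zero]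
        simp [eval_comp]
      have hAW : qTilde q a n ∣ qShiftPow q a n * (qShiftPow q b n).comp (C q * X)
          - (qShiftPow q a n).comp (C q * X) * qShiftPow q b n := ⟨_, hWfa⟩
      have hCW : qTilde q c n ∣ qShiftPow q a n * (qShiftPow q b n).comp (C q * X)
          - (qShiftPow q a n).comp (C q * X) * qShiftPow q b n := ⟨_, hWfc⟩
      rw [hWfb] at hAW hCW
      have hAV : qTilde q a n ∣ (qShiftPow q a n * b.comp (C (q ^ n) * X)
          - (qShiftPow q a n).comp (C q * X) * b) :=
        copAB.dvd_of_dvd_mul_left hAW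
      have hCV : qTilde q c n ∣ (qShiftPow q a n * b.comp (C (q ^ n) * X)
          - (qShiftPow q a n).comp (C q * X) * b) :=
        copBC.symm.dvd_of_dvd_mul_left hCW
      have copXA : IsCoprime (X : ℂ[X]) (qTilde q a n) :=
        isCoprime_X_of_eval_zero (by rw [qTilde_eval_zero]; exact pow_ne_zero _ ha0)
      have copXC : IsCoprime (X : ℂ[X]) (qTilde q c n) :=
        isCoprime_X_of_eval_zero (by rw [qTilde_eval_zero]; exact pow_ne_zero _ hc0)
      have h1 : X * (qTilde q a n * qTilde q c n)
          ∣ (qShiftPow q a n * b.comp (C (q ^ n) * X)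
            - (qShiftPow q a n).comp (C q * X) * b) :=
        (copXA.mul_right copXC).mul_dvd hXV (copAC.mul_dvd hAV hCV)
      have h2 := mul_dvd_mul_left (qTilde q b n) h1
      rw [← hWfb] at h2
      have h3 : X * (qTilde q a n * (qTilde q b n * qTilde q c n))
          = qTilde q b n * (X * (qTilde q a n * qTilde q c n)) := by ring
      rw [h3]
      exact h2
    · by_cases hc0 : c.eval 0 = 0
      · have ha0 : a.eval 0 ≠ 0 := by
          intro h0
          refine hrac 0 ?_ ?_
          · rw [qShiftPow_eval_zero, h0, zero_pow (by omega : n ≠ 0)]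
          · rw [qShiftPow_eval_zero, hc0, zero_pow (by omega : n ≠ 0)]
        have hXV : X ∣ (qShiftPow q a n * c.comp (C (q ^ n) * X)
            - (qShiftPow q a n).comp (C q * X) * c) := by
          rw [X_dvd_iff, coeff_zero_eq_eval_zero]
          simp [eval_comp]
        have hAW : qTilde q a n ∣ qShiftPow q a n * (qShiftPow q b n).comp (C q * X)
            - (qShiftPow q a n).comp (C q * X) * qShiftPow q b n := ⟨_, hWfa⟩
        have hBW : qTilde q b n ∣ qShiftPow q a n * (qShiftPow q b n).comp (C q * X)
            - (qShiftPow q a n).comp (C q * X) * qShiftPow q b n := ⟨_, hWfb⟩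
        rw [hWfc] at hAW hBW
        have hAV : qTilde q a n ∣ (qShiftPow q a n * c.comp (C (q ^ n) * X)
            - (qShiftPow q a n).comp (C q * X) * c) :=
          copAC.dvd_of_dvd_mul_left hAW
        have hBV : qTilde q b n ∣ (qShiftPow q a n * c.comp (C (q ^ n) * X)
            - (qShiftPow q a n).comp (C q * X) * c) :=
          copBC.dvd_of_dvd_mul_left hBW
        have copXA : IsCoprime (X : ℂ[X]) (qTilde q a n) :=
          isCoprime_X_of_eval_zero (by rw [qTilde_eval_zero]; exact pow_ne_zero _ ha0)
        have copXB : IsCoprime (X : ℂ[X]) (qTilde q b n) :=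
          isCoprime_X_of_eval_zero (by rw [qTilde_eval_zero]; exact pow_ne_zero _ hb0)
        have h1 : X * (qTilde q a n * qTilde q b n)
            ∣ (qShiftPow q a n * c.comp (C (q ^ n) * X)
              - (qShiftPow q a n).comp (C q * X) * c) :=
          (copXA.mul_right copXB).mul_dvd hXV (copAB.mul_dvd hAV hBV)
        have h2 := mul_dvd_mul_left (qTilde q c n) h1
        rw [← hWfc] at h2
        have h3 : X * (qTilde q a n * (qTilde q b n * qTilde q c n))
            = qTilde q c n * (X * (qTilde q a n * qTilde q b n)) := by ring
        rw [h3]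
        exact h2
      · -- b and c do not vanish at 0
        have hXV : X ∣ (a * (qShiftPow q b n).comp (C q * X)
            - a.comp (C (q ^ n) * X) * qShiftPow q b n) := by
          rw [X_dvd_iff, coeff_zero_eq_eval_zero]
          simp [eval_comp]
        have hBW : qTilde q b n ∣ qShiftPow q a n * (qShiftPow q b n).comp (C q * X)
            - (qShiftPow q a n).comp (C q * X) * qShiftPow q b n := ⟨_, hWfb⟩
        have hCW : qTilde q c n ∣ qShiftPow q a n * (qShiftPow q b n).comp (C q * X)
            - (qShiftPow q a n).comp (C q * X) * qShiftPow q b n := ⟨_, hWfc⟩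
        rw [hWfa] at hBW hCW
        have hBV : qTilde q b n ∣ (a * (qShiftPow q b n).comp (C q * X)
            - a.comp (C (q ^ n) * X) * qShiftPow q b n) :=
          copAB.symm.dvd_of_dvd_mul_left hBW
        have hCV : qTilde q c n ∣ (a * (qShiftPow q b n).comp (C q * X)
            - a.comp (C (q ^ n) * X) * qShiftPow q b n) :=
          copAC.symm.dvd_of_dvd_mul_left hCW
        have copXB : IsCoprime (X : ℂ[X]) (qTilde q b n) :=
          isCoprime_X_of_eval_zero (by rw [qTilde_eval_zero]; exact pow_ne_zero _ hb0)
        have copXC : IsCoprime (X : ℂ[X]) (qTilde q c n) :=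
          isCoprime_X_of_eval_zero (by rw [qTilde_eval_zero]; exact pow_ne_zero _ hc0)
        have h1 : X * (qTilde q b n * qTilde q c n)
            ∣ (a * (qShiftPow q b n).comp (C q * X)
              - a.comp (C (q ^ n) * X) * qShiftPow q b n) :=
          (copXB.mul_right copXC).mul_dvd hXV (copBC.mul_dvd hBV hCV)
        have h2 := mul_dvd_mul_left (qTilde q a n) h1
        rw [← hWfa] at h2
        have h3 : X * (qTilde q a n * (qTilde q b n * qTilde q c n))
            = qTilde q a n * (X * (qTilde q b n * qTilde q c n)) := by ring
        rw [h3]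
        exact h2
  -- lower bound on the degree of W
  have hlow : 1 + ((n - 1) * a.natDegree + ((n - 1) * b.natDegree + (n - 1) * c.natDegree))
      ≤ (qShiftPow q a n * (qShiftPow q b n).comp (C q * X)
        - (qShiftPow q a n).comp (C q * X) * qShiftPow q b n).natDegree := by
    have h := natDegree_le_of_dvd hdvd hWne
    rwa [natDegree_mul X_ne_zero
        (mul_ne_zero (qTilde_ne_zero hq0 ha n)
          (mul_ne_zero (qTilde_ne_zero hq0 hb n) (qTilde_ne_zero hq0 hc n))),
      natDegree_mul (qTilde_ne_zero hq0 ha n)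
        (mul_ne_zero (qTilde_ne_zero hq0 hb n) (qTilde_ne_zero hq0 hc n)),
      natDegree_mul (qTilde_ne_zero hq0 hb n) (qTilde_ne_zero hq0 hc n),
      natDegree_X, natDegree_qTilde hq0 ha n, natDegree_qTilde hq0 hb n,
      natDegree_qTilde hq0 hc n] at h
  -- arithmetic conclusion
  exact q_fermat_arith hn2 (by tauto) (hlow.trans hb3) (hlow.trans hb2) (hlow.trans hb1)
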